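/- (Theorem 2.1, sufficiency) Let H be a complex Hilbert space and L, M closed linear subspaces with Q = L ∩ M. If c(L,M) < 1, then every continuous linear functional f on L that vanishes on Q admits a continuous linear extension f̃ on all of H such that f̃(x) = f(x) for x ∈ L, f̃(x) = 0 for x ∈ M, and ‖f̃‖_{H*} ≤ ‖f‖_{L*} / √(1 − c(L,M)²). -/

import Mathlib

open scoped InnerProductSpace Pointwise

/-- The inclination `c(L,M)` of two subspaces `L`, `M` of a complex Hilbert space:
the supremum of `|⟪u,v⟫| / (‖u‖‖v‖)` over nonzero `u ∈ L ⊖ Q` and nonzero `v ∈ M ⊖ Q`,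
where `Q = L ⊓ M` and `L ⊖ Q = L ⊓ Qᗮ`, `M ⊖ Q = M ⊓ Qᗮ`. -/
noncomputable def inclination {H : Type*} [NormedAddCommGroup H] [InnerProductSpace ℂ H]
    (L M : Submodule ℂ H) : ℝ :=
  sSup {r : ℝ | ∃ u ∈ L ⊓ (L ⊓ M)ᗮ, ∃ v ∈ M ⊓ (L ⊓ M)ᗮ,
    u ≠ 0 ∧ v ≠ 0 ∧ r = ‖⟪u, v⟫_ℂ‖ / (‖u‖ * ‖v‖)}

set_option maxHeartbeats 1000000 in
theorem stmt_5 {H : Type*} [NormedAddCommGroup H] [InnerProductSpace ℂ H] [CompleteSpace H]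
    (L M : Submodule ℂ H) (hL : IsClosed (L : Set H)) (hM : IsClosed (M : Set H))
    (hLQ : ∃ u ∈ L ⊓ (L ⊓ M)ᗮ, u ≠ 0) (hMQ : ∃ v ∈ M ⊓ (L ⊓ M)ᗮ, v ≠ 0)
    (hc : inclination L M < 1)
    (f : L →L[ℂ] ℂ) (hf : ∀ x : L, (x : H) ∈ M → f x = 0) :
    ∃ g : H →L[ℂ] ℂ, (∀ x : L, g (x : H) = f x) ∧ (∀ x ∈ M, g x = 0) ∧
      ‖g‖ ≤ ‖f‖ / Real.sqrt (1 - inclination L M ^ 2) := by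
  classical
  set c := inclination L M with hcdef
  -- the defining set is bounded above by 1 (Cauchy–Schwarz)
  have hbdd : BddAbove {r : ℝ | ∃ u ∈ L ⊓ (L ⊓ M)ᗮ, ∃ v ∈ M ⊓ (L ⊓ M)ᗮ,
      u ≠ 0 ∧ v ≠ 0 ∧ r = ‖⟪u, v⟫_ℂ‖ / (‖u‖ * ‖v‖)} := by
    refine ⟨1, ?_⟩
    rintro r ⟨u, hu, v, hv, hu0, hv0, rfl⟩
    rw [div_le_one (mul_pos (norm_pos_iff.mpr hu0) (norm_pos_iff.mpr hv0))]
    exact norm_inner_le_norm u v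
  have hc0 : (0 : ℝ) ≤ c := by
    obtain ⟨u0, hu0, hu0ne⟩ := hLQ
    obtain ⟨v0, hv0, hv0ne⟩ := hMQ
    have hmem : ‖⟪u0, v0⟫_ℂ‖ / (‖u0‖ * ‖v0‖) ∈ {r : ℝ | ∃ u ∈ L ⊓ (L ⊓ M)ᗮ,
        ∃ v ∈ M ⊓ (L ⊓ M)ᗮ, u ≠ 0 ∧ v ≠ 0 ∧ r = ‖⟪u, v⟫_ℂ‖ / (‖u‖ * ‖v‖)} :=
      ⟨u0, hu0, v0, hv0, hu0ne, hv0ne, rfl⟩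
    exact le_trans (by positivity) (le_csSup hbdd hmem)
  -- the key property of the inclination
  have hkey : ∀ u ∈ L ⊓ (L ⊓ M)ᗮ, ∀ v ∈ M ⊓ (L ⊓ M)ᗮ,
      ‖⟪u, v⟫_ℂ‖ ≤ c * (‖u‖ * ‖v‖) := by
    intro u hu v hv
    by_cases hu0 : u = 0
    · simp only [hu0, inner_zero_left, norm_zero]
      exact mul_nonneg hc0 (by positivity)
    by_cases hv0 : v = 0
    · simp only [hv0, inner_zero_right, norm_zero]
      exact mul_nonneg hc0 (by positivity)
    have := le_csSup hbdd ⟨u, hu, v, hv, hu0, hv0, rfl⟩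
    exact (div_le_iff₀ (mul_pos (norm_pos_iff.mpr hu0) (norm_pos_iff.mpr hv0))).mp this
  have hc2 : c ^ 2 < 1 := by nlinarith
  set s : ℝ := Real.sqrt (1 - c ^ 2) with hsdef
  have hs : 0 < s := Real.sqrt_pos.mpr (by linarith)
  set C : ℝ := ‖f‖ / s with hCdef
  have hC0 : 0 ≤ C := div_nonneg (norm_nonneg f) hs.le
  -- Q is complete
  have hQc : IsClosed ((L ⊓ M : Submodule ℂ H) : Set H) := by
    rw [Submodule.coe_inf]; exact hL.inter hM
  haveI : CompleteSpace (L ⊓ M : Submodule ℂ H) := hQc.completeSpace_coe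
  -- main estimate
  have hbound : ∀ (x : L) (y : M), ‖f x‖ ≤ C * ‖(x : H) + (y : H)‖ := by
    intro x y
    set Q : Submodule ℂ H := L ⊓ M with hQdef
    set qx : H := (Q.orthogonalProjectionOnto (x : H) : H) with hqx
    set qy : H := (Q.orthogonalProjectionOnto (y : H) : H) with hqy
    have hqxQ : qx ∈ Q := SetLike.coe_mem _
    have hqyQ : qy ∈ Q := SetLike.coe_mem _
    set u : H := (x : H) - qx with hudef
    set v : H := (y : H) - qy with hvdef
    have huO : u ∈ Qᗮ := Q.sub_starProjection_mem_orthogonal (x : H)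
    have hvO : v ∈ Qᗮ := Q.sub_starProjection_mem_orthogonal (y : H)
    have huL : u ∈ L := L.sub_mem x.2 hqxQ.1
    have hvM : v ∈ M := M.sub_mem y.2 hqyQ.2
    -- f x = f u
    have hfx : f x = f ⟨u, huL⟩ := by
      have hsplit : x = ⟨u, huL⟩ + ⟨qx, hqxQ.1⟩ := by
        apply Subtype.ext
        simp [hudef]
      rw [hsplit, map_add, hf ⟨qx, hqxQ.1⟩ hqxQ.2, add_zero]
    -- inner product estimate
    have hiuv : ‖⟪u, v⟫_ℂ‖ ≤ c * (‖u‖ * ‖v‖) :=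
      hkey u ⟨huL, huO⟩ v ⟨hvM, hvO⟩
    -- ‖u + v‖ ≤ ‖x + y‖
    have hperp : ⟪qx + qy, u + v⟫_ℂ = 0 :=
      (Qᗮ.add_mem huO hvO) (qx + qy) (Q.add_mem hqxQ hqyQ)
    have hxy : (x : H) + (y : H) = (qx + qy) + (u + v) := by
      simp [hudef, hvdef]; abel
    have h1 : ‖u + v‖ ^ 2 ≤ ‖(x : H) + (y : H)‖ ^ 2 := by
      have hpyth := norm_add_sq_eq_norm_sq_add_norm_sq_of_inner_eq_zero _ _ hperp
      rw [hxy]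
      nlinarith [sq_nonneg ‖qx + qy‖, hpyth]
    have h2 : (1 - c ^ 2) * ‖u‖ ^ 2 ≤ ‖u + v‖ ^ 2 := by
      have hre : |RCLike.re (⟪u, v⟫_ℂ)| ≤ c * (‖u‖ * ‖v‖) :=
        le_trans (RCLike.abs_re_le_norm _) hiuv
      have hns : ‖u + v‖ ^ 2 = ‖u‖ ^ 2 + 2 * RCLike.re (⟪u, v⟫_ℂ) + ‖v‖ ^ 2 :=
        norm_add_sq u v
      have habs := abs_le.mp hre
      nlinarith [sq_nonneg (c * ‖u‖ - ‖v‖), sq_nonneg ‖u‖, hc2]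
    have h3 : s * ‖u‖ ≤ ‖(x : H) + (y : H)‖ := by
      have hsq : (s * ‖u‖) ^ 2 ≤ ‖(x : H) + (y : H)‖ ^ 2 := by
        rw [mul_pow, hsdef, Real.sq_sqrt (by linarith)]
        linarith
      calc s * ‖u‖ = Real.sqrt ((s * ‖u‖) ^ 2) :=
            (Real.sqrt_sq (by positivity)).symm
        _ ≤ Real.sqrt (‖(x : H) + (y : H)‖ ^ 2) := Real.sqrt_le_sqrt hsq
        _ = ‖(x : H) + (y : H)‖ := Real.sqrt_sq (norm_nonneg _)
    -- combining
    have h4 : ‖f x‖ ≤ ‖f‖ * ‖u‖ := by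
      rw [hfx]
      exact f.le_opNorm ⟨u, huL⟩
    rw [hCdef, div_mul_eq_mul_div, le_div_iff₀ hs]
    nlinarith [norm_nonneg f, mul_le_mul_of_nonneg_left h3 (norm_nonneg f)]
  -- construct the functional on L ⊔ M via the coprod map
  set φ : (L × M) →ₗ[ℂ] H := L.subtype.coprod M.subtype with hφdef
  have hker : LinearMap.ker φ ≤
      LinearMap.ker ((f : L →ₗ[ℂ] ℂ).comp (LinearMap.fst ℂ L M)) := by
    rintro ⟨x, y⟩ h
    simp only [LinearMap.mem_ker, LinearMap.coprod_apply, Submodule.coe_subtype,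
      hφdef] at h
    have hxM : (x : H) ∈ M := by
      have : (x : H) = -(y : H) := eq_neg_of_add_eq_zero_left h
      rw [this]; exact M.neg_mem y.2
    simpa using hf x hxM
  set F₁ : ((L × M) ⧸ LinearMap.ker φ) →ₗ[ℂ] ℂ :=
    (LinearMap.ker φ).liftQ ((f : L →ₗ[ℂ] ℂ).comp (LinearMap.fst ℂ L M)) hker with hF₁def
  set e := LinearMap.quotKerEquivRange φ with hedef
  set F₂ : (LinearMap.range φ) →ₗ[ℂ] ℂ := F₁ ∘ₗ (e.symm : LinearMap.range φ →ₗ[ℂ] (L × M) ⧸ LinearMap.ker φ) with hF₂def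
  have hF₂ : ∀ (x : L) (y : M) (n : LinearMap.range φ),
      (n : H) = (x : H) + (y : H) → F₂ n = f x := by
    rintro x y ⟨n, hn⟩ h
    have he1 : e (Submodule.Quotient.mk (x, y)) = ⟨n, hn⟩ := by
      apply Subtype.ext
      rw [hedef, LinearMap.quotKerEquivRange_apply_mk]
      simpa [hφdef] using h.symm
    have he2 : e.symm ⟨n, hn⟩ = Submodule.Quotient.mk (x, y) := by
      rw [← he1, LinearEquiv.symm_apply_apply]
    simp [hF₂def, he2, hF₁def]
  -- continuity bound
  have hF₂norm : ∀ n : LinearMap.range φ, ‖F₂ n‖ ≤ C * ‖(n : H)‖ := by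
    rintro ⟨n, hn⟩
    obtain ⟨⟨x, y⟩, rfl⟩ := hn
    have hco : (φ (x, y) : H) = (x : H) + (y : H) := by simp [hφdef]
    rw [hF₂ x y ⟨φ (x, y), ⟨(x, y), rfl⟩⟩ hco]
    rw [hco] at *
    exact hbound x y
  set Fc : (LinearMap.range φ) →L[ℂ] ℂ := LinearMap.mkContinuous F₂ C hF₂norm with hFcdef
  have hFcnorm : ‖Fc‖ ≤ C := LinearMap.mkContinuous_norm_le _ hC0 _
  obtain ⟨g, hg, hgnorm⟩ := exists_extension_norm_eq (LinearMap.range φ) Fc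
  refine ⟨g, ?_, ?_, ?_⟩
  · intro x
    have hmem : (x : H) ∈ LinearMap.range φ := ⟨(x, 0), by simp [hφdef]⟩
    have := hg ⟨(x : H), hmem⟩
    rw [this]
    exact hF₂ x 0 ⟨(x : H), hmem⟩ (by simp)
  · intro y hy
    have hmem : y ∈ LinearMap.range φ := ⟨(0, ⟨y, hy⟩), by simp [hφdef]⟩
    have := hg ⟨y, hmem⟩
    rw [this]
    have := hF₂ 0 ⟨y, hy⟩ ⟨y, hmem⟩ (by simp)
    exact this.trans (map_zero f)
  · rw [hgnorm]
    exact hFcnorm
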